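/- Let Λ > 1 and ζ̃ ∈ (0,1), ĉ ∈ (0,1], Δ ≥ 1, γ > 0. Suppose for two probability measures μ¹, μ² and maps 𝓕_n one has, for every n: (i) the uncoupled masses satisfy μ^i_{⌊n/2⌋}(M) ≤ (1−½ζ̃)^{n/(2Δ)−1}; (ii) for every j ≤ n/2, the coupled pieces satisfy |∫ f∘𝓕_n dμ̄¹_j − ∫ f∘𝓕_n dμ̄²_j| ≤ (μ̄¹_j(M) + μ̄²_j(M))·|f|_γ·(ĉ^{−1}Λ^{−(n−j)})^γ with Σ_j μ̄^i_j(M) ≤ 1. Then |∫ f∘𝓕_n dμ¹ − ∫ f∘𝓕_n dμ²| ≤ C_γ·(‖f‖_∞ + |f|_γ)·θ_γ^n for all n, where C_γ = 2·max((1−½ζ̃)^{−1}, ĉ^{−γ}) and θ_γ = max((1−½ζ̃)^{1/(2Δ)}, Λ^{−γ/2}). -/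

import Mathlib

open MeasureTheory

/-- Final memory-loss estimate assembly: combining the decay of the uncoupled mass with
the Hölder-observable estimate for the coupled pieces yields exponential memory loss
with `C_γ = 2·max((1−½ζ)⁻¹, ĉ^{−γ})` and `θ_γ = max((1−½ζ)^{1/(2Δ)}, Λ^{−γ/2})`. -/
theorem stmt_15 {X : Type*} [MeasurableSpace X]
    (𝓕 : ℕ → X → X) (h𝓕meas : ∀ n, Measurable (𝓕 n))
    (μ1 μ2 : Measure X) [IsProbabilityMeasure μ1] [IsProbabilityMeasure μ2]
    (mbar1 mbar2 rest1 rest2 : ℕ → Measure X)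
    (ζ Λ c : ℝ) (Δ : ℕ) (γ : ℝ)
    (hζ : ζ ∈ Set.Ioo (0:ℝ) 1) (hΛ : 1 < Λ) (hc0 : 0 < c) (hc1 : c ≤ 1)
    (hΔ : 1 ≤ Δ) (hγ : 0 < γ)
    (hdec1 : ∀ n : ℕ, μ1 = (∑ j ∈ Finset.range (n / 2 + 1), mbar1 j) + rest1 (n / 2))
    (hdec2 : ∀ n : ℕ, μ2 = (∑ j ∈ Finset.range (n / 2 + 1), mbar2 j) + rest2 (n / 2))
    (hrest1 : ∀ n : ℕ, (rest1 (n / 2) Set.univ).toReal ≤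
      (1 - ζ / 2) ^ ((n : ℝ) / (2 * (Δ : ℝ)) - 1))
    (hrest2 : ∀ n : ℕ, (rest2 (n / 2) Set.univ).toReal ≤
      (1 - ζ / 2) ^ ((n : ℝ) / (2 * (Δ : ℝ)) - 1))
    (hmass1 : ∀ m : ℕ, (∑ j ∈ Finset.range (m + 1), (mbar1 j Set.univ).toReal) ≤ 1)
    (hmass2 : ∀ m : ℕ, (∑ j ∈ Finset.range (m + 1), (mbar2 j Set.univ).toReal) ≤ 1) :
    ∀ (f : X → ℝ) (Mf Kf : ℝ), Measurable f → (∀ x, |f x| ≤ Mf) → 0 ≤ Kf →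
      (∀ n j : ℕ, j ≤ n / 2 →
        |(∫ x, f (𝓕 n x) ∂(mbar1 j)) - ∫ x, f (𝓕 n x) ∂(mbar2 j)| ≤
          ((mbar1 j Set.univ).toReal + (mbar2 j Set.univ).toReal) * Kf *
            (c⁻¹ * (Λ ^ (n - j))⁻¹) ^ γ) →
      ∀ n : ℕ,
        |(∫ x, f (𝓕 n x) ∂μ1) - ∫ x, f (𝓕 n x) ∂μ2| ≤
          2 * max (1 - ζ / 2)⁻¹ (c ^ (-γ)) * (Mf + Kf) *
            (max ((1 - ζ / 2) ^ ((1 : ℝ) / (2 * (Δ : ℝ)))) (Λ ^ (-(γ / 2)))) ^ n := by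
  intro f Mf Kf hfmeas hfbd hKf hcoupled n
  have hΛ0 : (0:ℝ) < Λ := lt_trans one_pos hΛ
  have hb0 : (0:ℝ) < 1 - ζ / 2 := by nlinarith [hζ.2]
  have hb1 : (1:ℝ) - ζ / 2 < 1 := by nlinarith [hζ.1]
  have hΔ0 : (0:ℝ) < (Δ:ℝ) := by exact_mod_cast lt_of_lt_of_le zero_lt_one hΔ
  -- nonemptiness
  have hX : Nonempty X := by
    by_contra h
    rw [not_nonempty_iff] at h
    have h1 : μ1 Set.univ = 1 := measure_univ
    rw [Set.univ_eq_empty_iff.mpr h, measure_empty] at h1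
    exact zero_ne_one h1
  have hMf : 0 ≤ Mf := le_trans (abs_nonneg _) (hfbd hX.some)
  -- finiteness of pieces
  have hfin1 : ∀ j, (mbar1 j) Set.univ ≤ 1 := by
    intro j
    have e : (2*j)/2 = j := by omega
    have h := congrArg (fun μ : Measure X => μ Set.univ) (hdec1 (2*j))
    simp only [Measure.add_apply, Measure.finset_sum_apply, measure_univ, e] at h
    calc mbar1 j Set.univ ≤ ∑ i ∈ Finset.range (j+1), mbar1 i Set.univ :=
        Finset.single_le_sum (f := fun i => mbar1 i Set.univ) (fun i _ => zero_le)
          (Finset.self_mem_range_succ j)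
      _ ≤ 1 := by rw [h]; exact le_self_add
  have hfin2 : ∀ j, (mbar2 j) Set.univ ≤ 1 := by
    intro j
    have e : (2*j)/2 = j := by omega
    have h := congrArg (fun μ : Measure X => μ Set.univ) (hdec2 (2*j))
    simp only [Measure.add_apply, Measure.finset_sum_apply, measure_univ, e] at h
    calc mbar2 j Set.univ ≤ ∑ i ∈ Finset.range (j+1), mbar2 i Set.univ :=
        Finset.single_le_sum (f := fun i => mbar2 i Set.univ) (fun i _ => zero_le)
          (Finset.self_mem_range_succ j)
      _ ≤ 1 := by rw [h]; exact le_self_add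
  have hrfin1 : ∀ m, (rest1 m) Set.univ ≤ 1 := by
    intro m
    have e : (2*m)/2 = m := by omega
    have h := congrArg (fun μ : Measure X => μ Set.univ) (hdec1 (2*m))
    simp only [Measure.add_apply, Measure.finset_sum_apply, measure_univ, e] at h
    rw [h]; exact le_add_self
  have hrfin2 : ∀ m, (rest2 m) Set.univ ≤ 1 := by
    intro m
    have e : (2*m)/2 = m := by omega
    have h := congrArg (fun μ : Measure X => μ Set.univ) (hdec2 (2*m))
    simp only [Measure.add_apply, Measure.finset_sum_apply, measure_univ, e] at h
    rw [h]; exact le_add_self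
  -- integrability / boundedness helpers
  have hint : ∀ ν : Measure X, ν Set.univ ≤ 1 → Integrable (fun x => f (𝓕 n x)) ν := by
    intro ν hν
    haveI : IsFiniteMeasure ν := ⟨lt_of_le_of_lt hν ENNReal.one_lt_top⟩
    refine ⟨(hfmeas.comp (h𝓕meas n)).aestronglyMeasurable, ?_⟩
    exact HasFiniteIntegral.of_bounded (C := Mf)
      (Filter.Eventually.of_forall fun x => by simpa [Real.norm_eq_abs] using hfbd (𝓕 n x))
  have hbdd : ∀ ν : Measure X, ν Set.univ ≤ 1 →
      |∫ x, f (𝓕 n x) ∂ν| ≤ Mf * (ν Set.univ).toReal := by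
    intro ν hν
    haveI : IsFiniteMeasure ν := ⟨lt_of_le_of_lt hν ENNReal.one_lt_top⟩
    simpa [Real.norm_eq_abs, measureReal_def] using
      norm_integral_le_of_norm_le_const (μ := ν) (f := fun x => f (𝓕 n x)) (C := Mf)
        (Filter.Eventually.of_forall fun x => by simpa [Real.norm_eq_abs] using hfbd (𝓕 n x))
  -- decompose the integrals
  have hI1 : (∫ x, f (𝓕 n x) ∂μ1) =
      (∑ j ∈ Finset.range (n/2+1), ∫ x, f (𝓕 n x) ∂(mbar1 j)) +
        ∫ x, f (𝓕 n x) ∂(rest1 (n/2)) := by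
    conv_lhs => rw [hdec1 n]
    rw [integral_add_measure, integral_finset_sum_measure (fun j _ => hint _ (hfin1 j))]
    · exact integrable_finset_sum_measure.2 fun j _ => hint _ (hfin1 j)
    · exact hint _ (hrfin1 _)
  have hI2 : (∫ x, f (𝓕 n x) ∂μ2) =
      (∑ j ∈ Finset.range (n/2+1), ∫ x, f (𝓕 n x) ∂(mbar2 j)) +
        ∫ x, f (𝓕 n x) ∂(rest2 (n/2)) := by
    conv_lhs => rw [hdec2 n]
    rw [integral_add_measure, integral_finset_sum_measure (fun j _ => hint _ (hfin2 j))]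
    · exact integrable_finset_sum_measure.2 fun j _ => hint _ (hfin2 j)
    · exact hint _ (hrfin2 _)
  set b : ℝ := 1 - ζ / 2 with hbdef
  set θ : ℝ := max (b ^ ((1:ℝ)/(2*(Δ:ℝ)))) (Λ ^ (-(γ/2))) with hθdef
  have hθ0 : 0 ≤ θ := le_trans (Real.rpow_nonneg hb0.le _) (le_max_left _ _)
  set C0 : ℝ := max b⁻¹ (c ^ (-γ)) with hC0def
  -- bound per coupled piece
  have hA : ∀ j ∈ Finset.range (n/2+1),
      (c⁻¹ * (Λ ^ (n - j))⁻¹) ^ γ ≤ c ^ (-γ) * (Λ ^ (-(γ/2))) ^ n := by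
    intro j hj
    rw [Finset.mem_range, Nat.lt_succ_iff] at hj
    have hjn : j ≤ n := le_trans hj (Nat.div_le_self n 2)
    have h1 : (c⁻¹ * (Λ ^ (n - j))⁻¹) ^ γ = c ^ (-γ) * Λ ^ (-((n:ℝ) - j) * γ) := by
      rw [Real.mul_rpow (inv_nonneg.2 hc0.le) (inv_nonneg.2 (pow_nonneg hΛ0.le _)),
        Real.inv_rpow hc0.le, ← Real.rpow_neg hc0.le,
        ← Real.rpow_natCast Λ (n - j), ← Real.rpow_neg hΛ0.le, ← Real.rpow_mul hΛ0.le,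
        Nat.cast_sub hjn]
    have h2 : (Λ ^ (-(γ/2))) ^ n = Λ ^ (-(γ/2) * n) := by
      rw [← Real.rpow_natCast (Λ ^ (-(γ/2))) n, ← Real.rpow_mul hΛ0.le]
    rw [h1, h2]
    have hcast : (j:ℝ) ≤ (n:ℝ)/2 := by
      calc (j:ℝ) ≤ ((n/2 : ℕ) : ℝ) := by exact_mod_cast hj
        _ ≤ (n:ℝ)/2 := Nat.cast_div_le
    have hexp : -((n:ℝ) - j) * γ ≤ -(γ/2) * n := by nlinarith
    exact mul_le_mul_of_nonneg_left (Real.rpow_le_rpow_of_exponent_le hΛ.le hexp)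
      (Real.rpow_nonneg hc0.le _)
  -- sum of coupled differences
  have hsum : (∑ j ∈ Finset.range (n/2+1),
      |(∫ x, f (𝓕 n x) ∂(mbar1 j)) - ∫ x, f (𝓕 n x) ∂(mbar2 j)|) ≤
      2 * Kf * (c ^ (-γ) * (Λ ^ (-(γ/2))) ^ n) := by
    have hB0 : 0 ≤ c ^ (-γ) * (Λ ^ (-(γ/2))) ^ n :=
      mul_nonneg (Real.rpow_nonneg hc0.le _) (pow_nonneg (Real.rpow_nonneg hΛ0.le _) _)
    calc (∑ j ∈ Finset.range (n/2+1),
        |(∫ x, f (𝓕 n x) ∂(mbar1 j)) - ∫ x, f (𝓕 n x) ∂(mbar2 j)|)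
        ≤ ∑ j ∈ Finset.range (n/2+1),
          ((mbar1 j Set.univ).toReal + (mbar2 j Set.univ).toReal) * Kf *
            (c ^ (-γ) * (Λ ^ (-(γ/2))) ^ n) := by
          refine Finset.sum_le_sum fun j hj => ?_
          rw [Finset.mem_range, Nat.lt_succ_iff] at hj
          refine le_trans (hcoupled n j hj) ?_
          refine mul_le_mul_of_nonneg_left (hA j (by simpa [Nat.lt_succ_iff] using hj)) ?_
          exact mul_nonneg (add_nonneg ENNReal.toReal_nonneg ENNReal.toReal_nonneg) hKf
      _ ≤ 2 * Kf * (c ^ (-γ) * (Λ ^ (-(γ/2))) ^ n) := by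
          rw [← Finset.sum_mul, ← Finset.sum_mul]
          have : (∑ j ∈ Finset.range (n/2+1),
              ((mbar1 j Set.univ).toReal + (mbar2 j Set.univ).toReal)) ≤ 2 := by
            rw [Finset.sum_add_distrib]
            have := hmass1 (n/2); have := hmass2 (n/2); linarith
          refine mul_le_mul_of_nonneg_right (mul_le_mul_of_nonneg_right this hKf) hB0
  -- rest bounds
  have hbpow : b ^ ((n:ℝ)/(2*(Δ:ℝ)) - 1) = b⁻¹ * (b ^ ((1:ℝ)/(2*(Δ:ℝ)))) ^ n := by
    have : (n:ℝ)/(2*(Δ:ℝ)) - 1 = (-1) + ((1:ℝ)/(2*(Δ:ℝ))) * n := by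
      field_simp; ring
    rw [this, Real.rpow_add hb0, Real.rpow_neg_one, Real.rpow_mul hb0.le,
      Real.rpow_natCast]
  have hrestb : ∀ (r : ℕ → Measure X), (∀ m, (r m) Set.univ ≤ 1) →
      ((r (n/2)) Set.univ).toReal ≤ b ^ ((n:ℝ)/(2*(Δ:ℝ)) - 1) →
      |∫ x, f (𝓕 n x) ∂(r (n/2))| ≤ Mf * (b⁻¹ * (b ^ ((1:ℝ)/(2*(Δ:ℝ)))) ^ n) := by
    intro r hrle hrb
    refine le_trans (hbdd _ (hrle _)) ?_
    rw [← hbpow]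
    exact mul_le_mul_of_nonneg_left hrb hMf
  -- assemble
  rw [hI1, hI2]
  have htri : |((∑ j ∈ Finset.range (n/2+1), ∫ x, f (𝓕 n x) ∂(mbar1 j)) +
        ∫ x, f (𝓕 n x) ∂(rest1 (n/2))) -
      ((∑ j ∈ Finset.range (n/2+1), ∫ x, f (𝓕 n x) ∂(mbar2 j)) +
        ∫ x, f (𝓕 n x) ∂(rest2 (n/2)))| ≤
      (∑ j ∈ Finset.range (n/2+1),
        |(∫ x, f (𝓕 n x) ∂(mbar1 j)) - ∫ x, f (𝓕 n x) ∂(mbar2 j)|) +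
      (|∫ x, f (𝓕 n x) ∂(rest1 (n/2))| + |∫ x, f (𝓕 n x) ∂(rest2 (n/2))|) := by
    have h1 : ((∑ j ∈ Finset.range (n/2+1), ∫ x, f (𝓕 n x) ∂(mbar1 j)) +
        ∫ x, f (𝓕 n x) ∂(rest1 (n/2))) -
      ((∑ j ∈ Finset.range (n/2+1), ∫ x, f (𝓕 n x) ∂(mbar2 j)) +
        ∫ x, f (𝓕 n x) ∂(rest2 (n/2))) =
      (∑ j ∈ Finset.range (n/2+1),
        ((∫ x, f (𝓕 n x) ∂(mbar1 j)) - ∫ x, f (𝓕 n x) ∂(mbar2 j))) +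
      ((∫ x, f (𝓕 n x) ∂(rest1 (n/2))) - ∫ x, f (𝓕 n x) ∂(rest2 (n/2))) := by
      rw [Finset.sum_sub_distrib]; ring
    rw [h1]
    refine le_trans (abs_add_le _ _) ?_
    gcongr
    · exact Finset.abs_sum_le_sum_abs _ _
    · exact abs_sub _ _
  refine le_trans htri ?_
  have hr1 := hrestb rest1 hrfin1 (hrest1 n)
  have hr2 := hrestb rest2 hrfin2 (hrest2 n)
  -- final numeric assembly
  have hc0' : c ^ (-γ) ≤ C0 := le_max_right _ _
  have hbinv : b⁻¹ ≤ C0 := le_max_left _ _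
  have hθ1 : (Λ ^ (-(γ/2))) ^ n ≤ θ ^ n :=
    pow_le_pow_left₀ (Real.rpow_nonneg hΛ0.le _) (le_max_right _ _) n
  have hθ2 : (b ^ ((1:ℝ)/(2*(Δ:ℝ)))) ^ n ≤ θ ^ n :=
    pow_le_pow_left₀ (Real.rpow_nonneg hb0.le _) (le_max_left _ _) n
  have hθn : (0:ℝ) ≤ θ ^ n := pow_nonneg hθ0 n
  have h1 : 2 * Kf * (c ^ (-γ) * (Λ ^ (-(γ/2))) ^ n) ≤ 2 * Kf * (C0 * θ ^ n) := by
    refine mul_le_mul_of_nonneg_left ?_ (by linarith)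
    exact mul_le_mul hc0' hθ1 (pow_nonneg (Real.rpow_nonneg hΛ0.le _) n)
      (le_trans (Real.rpow_nonneg hc0.le _) hc0')
  have h2 : Mf * (b⁻¹ * (b ^ ((1:ℝ)/(2*(Δ:ℝ)))) ^ n) ≤ Mf * (C0 * θ ^ n) := by
    refine mul_le_mul_of_nonneg_left ?_ hMf
    exact mul_le_mul hbinv hθ2 (pow_nonneg (Real.rpow_nonneg hb0.le _) n)
      (le_trans (inv_nonneg.2 hb0.le) hbinv)
  calc (∑ j ∈ Finset.range (n/2+1),
        |(∫ x, f (𝓕 n x) ∂(mbar1 j)) - ∫ x, f (𝓕 n x) ∂(mbar2 j)|) +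
      (|∫ x, f (𝓕 n x) ∂(rest1 (n/2))| + |∫ x, f (𝓕 n x) ∂(rest2 (n/2))|)
      ≤ 2 * Kf * (C0 * θ ^ n) + (Mf * (C0 * θ ^ n) + Mf * (C0 * θ ^ n)) := by
        gcongr ?_ + (?_ + ?_)
        · exact le_trans hsum h1
        · exact le_trans hr1 h2
        · exact le_trans hr2 h2
    _ = 2 * C0 * (Mf + Kf) * θ ^ n := by ring
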